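/- Let n ≥ 1 and let t ∈ ℕ^n with ‖t‖₁ = k. Then l1( a^t (a^t)* ) ≤ 2^k · k!. In particular, in W_1, l1( a^k (a*)^k ) = Σ_{m=0}^{k} (k!)² / ((m!)² (k−m)!) ≤ 2^k · k!. -/

import Mathlib

open scoped ComplexOrder

noncomputable section

/-- The Weyl algebra `W_n`: a complex `*`-algebra generated by `a 1, …, a n` and their
adjoints, satisfying the canonical commutation relations, in which the normally ordered
monomials `(a*)^s a^t` form a basis (this pins the algebra down up to `*`-isomorphism). -/
structure WeylAlgebra (n : ℕ) where
  carrier : Type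
  [ring : Ring carrier]
  [alg : Algebra ℂ carrier]
  [starRing : StarRing carrier]
  [starModule : StarModule ℂ carrier]
  a : Fin n → carrier
  comm_aa : ∀ i j, a i * a j = a j * a i
  comm_ss : ∀ i j, star (a i) * star (a j) = star (a j) * star (a i)
  ccr : ∀ i j : Fin n, a i * star (a j) - star (a j) * a i = if i = j then 1 else 0
  basis : Module.Basis ((Fin n → ℕ) × (Fin n → ℕ)) ℂ carrier
  basis_eq : ∀ st : (Fin n → ℕ) × (Fin n → ℕ),
    basis st = (List.ofFn fun i => star (a i) ^ st.1 i).prod *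
               (List.ofFn fun i => (a i) ^ st.2 i).prod

attribute [instance] WeylAlgebra.ring WeylAlgebra.alg WeylAlgebra.starRing
  WeylAlgebra.starModule

namespace WeylAlgebra

variable {n : ℕ} (W : WeylAlgebra n)

/-- The monomial `a^t = ∏ i, (a i)^(t i)`. -/
def amon (t : Fin n → ℕ) : W.carrier := (List.ofFn fun i => W.a i ^ t i).prod

/-- The normally ordered monomial `(a*)^s a^t`. -/
def nmon (s t : Fin n → ℕ) : W.carrier :=
  (List.ofFn fun i => star (W.a i) ^ s i).prod * (List.ofFn fun i => W.a i ^ t i).prod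

/-- The `l₁`-norm of the coefficients of the (unique) normal form of `p`. -/
def l1 (p : W.carrier) : ℝ := (W.basis.repr p).sum fun _ c => ‖c‖

/-- The degree of `p`: the maximal `‖s‖₁ + ‖t‖₁` over monomials appearing in the normal
form of `p`. -/
def deg (p : W.carrier) : ℕ :=
  (W.basis.repr p).support.sup fun st => (∑ i, st.1 i) + (∑ i, st.2 i)

/-- `p` is a sum of squares, i.e. `p ∈ Σ²`. -/
def IsSOS (p : W.carrier) : Prop :=
  ∃ (N : ℕ) (f : Fin N → W.carrier), p = ∑ i, star (f i) * f i

/-- `p ∈ Σ²_k`: `p` is a sum of squares of elements of degree at most `k`. -/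
def IsSOSdeg (k : ℕ) (p : W.carrier) : Prop :=
  ∃ (N : ℕ) (f : Fin N → W.carrier), (∀ i, W.deg (f i) ≤ k) ∧ p = ∑ i, star (f i) * f i

/-- The element `g^r_c = ∑_{‖t‖₁ ≤ r} (n-1)!/(c^{‖t‖₁} (n+‖t‖₁-1)!) • a^t (a^t)*`. -/
def gpoly (c : ℝ) (r : ℕ) : W.carrier :=
  ∑ t ∈ (Fintype.piFinset fun _ : Fin n => Finset.range (r + 1)).filter
      (fun t => ∑ i, t i ≤ r),
    ((Nat.factorial (n - 1) : ℂ) /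
        ((c : ℂ) ^ (∑ i, t i) * (Nat.factorial (n + (∑ i, t i) - 1) : ℂ))) •
      (W.amon t * star (W.amon t))

/-- The value in `W` of a single letter (`Sum.inl i ↦ a i`, `Sum.inr i ↦ (a i)*`). -/
def letterVal : Fin n ⊕ Fin n → W.carrier
  | Sum.inl i => W.a i
  | Sum.inr i => star (W.a i)

/-- The value in `W` of a word (monomial) in the letters `a_1,…,a_n,a_1*,…,a_n*`. -/
def wordVal (w : List (Fin n ⊕ Fin n)) : W.carrier := (w.map W.letterVal).prod

end WeylAlgebra

/-- The domain of the Schrödinger representation: finitely supported functions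
`ℕ^n → ℂ`. -/
abbrev DSpace (n : ℕ) := (Fin n → ℕ) →₀ ℂ

/-- The number basis vector `e_m`. -/
def eVec {n : ℕ} (m : Fin n → ℕ) : DSpace n := Finsupp.single m 1

/-- The inner product `⟨f, g⟩ = ∑_m conj (f m) * g m` on `DSpace n`
(antilinear in the first argument). -/
def innerD {n : ℕ} (f g : DSpace n) : ℂ := f.sum fun m c => (starRingEnd ℂ) c * g m

/-- The Schrödinger (Fock) representation of the Weyl algebra `W` on `DSpace n`,
specified by its action on the number basis. -/
structure Schrodinger {n : ℕ} (W : WeylAlgebra n) where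
  rep : W.carrier →ₐ[ℂ] Module.End ℂ (DSpace n)
  rep_a : ∀ (i : Fin n) (m : Fin n → ℕ),
    rep (W.a i) (eVec m) =
      (Real.sqrt (m i) : ℂ) • eVec (Function.update m i (m i - 1))
  rep_astar : ∀ (i : Fin n) (m : Fin n → ℕ),
    rep (star (W.a i)) (eVec m) =
      (Real.sqrt (m i + 1) : ℂ) • eVec (Function.update m i (m i + 1))

namespace Schrodinger

variable {n : ℕ} {W : WeylAlgebra n} (S : Schrodinger W)

/-- `π(p) ≥ 0`: the quadratic form of `π(p)` is nonnegative on the domain. -/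
def PiNonneg (p : W.carrier) : Prop := ∀ φ : DSpace n, 0 ≤ innerD φ (S.rep p φ)

/-- The set of energies `⟨φ, π(p) φ⟩` over normalized `φ` in the domain. -/
def energySet (p : W.carrier) : Set ℝ :=
  { x | ∃ φ : DSpace n, innerD φ φ = 1 ∧ (innerD φ (S.rep p φ)).re = x }

/-- `λ_inf(p)`, the infimum of `⟨φ, π(p) φ⟩` over normalized `φ`. -/
def lambdaInf (p : W.carrier) : ℝ := sInf (S.energySet p)

end Schrodinger


noncomputable section Aux

open Finset

/-! ### Generic list product lemmas -/

theorem list_prod_interchange {M : Type*} [Monoid M] {ι : Type*} :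
    ∀ (l : List ι) (x y : ι → M), l.Nodup →
      (∀ i ∈ l, ∀ j ∈ l, i ≠ j → Commute (x i) (y j)) →
      (l.map x).prod * (l.map y).prod = (l.map fun i => x i * y i).prod := by
  intro l
  induction l with
  | nil => simp
  | cons a l ih =>
    intro x y hnd hc
    simp only [List.map_cons, List.prod_cons]
    have ha : a ∉ l := (List.nodup_cons.mp hnd).1
    have hP : Commute ((l.map x).prod) (y a) := by
      apply Commute.list_prod_left
      intro z hz
      obtain ⟨i, hi, rfl⟩ := List.mem_map.mp hz
      exact hc i (List.mem_cons_of_mem _ hi) a List.mem_cons_self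
        (fun h => ha (h ▸ hi))
    calc x a * (l.map x).prod * (y a * (l.map y).prod)
        = x a * ((l.map x).prod * (y a * (l.map y).prod)) := by rw [mul_assoc]
      _ = x a * (((l.map x).prod * y a) * (l.map y).prod) := by rw [mul_assoc]
      _ = x a * ((y a * (l.map x).prod) * (l.map y).prod) := by rw [hP.eq]
      _ = (x a * y a) * ((l.map x).prod * (l.map y).prod) := by
            rw [mul_assoc (y a), ← mul_assoc]
      _ = (x a * y a) * (l.map fun i => x i * y i).prod := by
            rw [ih x y (List.nodup_cons.mp hnd).2
              (fun i hi j hj hij =>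
                hc i (List.mem_cons_of_mem _ hi) j (List.mem_cons_of_mem _ hj) hij)]

theorem list_prod_eq_single {M : Type*} [Monoid M] {ι : Type*} :
    ∀ (l : List ι) (f : ι → M) (a : ι), l.Nodup → a ∈ l →
      (∀ i ∈ l, i ≠ a → f i = 1) → (l.map f).prod = f a := by
  intro l
  induction l with
  | nil => intro f a _ ha; cases ha
  | cons b l ih =>
    intro f a hnd ha hf
    simp only [List.map_cons, List.prod_cons]
    have hb : b ∉ l := (List.nodup_cons.mp hnd).1
    rcases List.mem_cons.mp ha with rfl | ha'
    · have : ∀ z ∈ l.map f, z = 1 := by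
        intro z hz
        obtain ⟨i, hi, rfl⟩ := List.mem_map.mp hz
        exact hf i (List.mem_cons_of_mem _ hi) (fun h => hb (h ▸ hi))
      rw [List.prod_eq_one this, mul_one]
    · rw [hf b List.mem_cons_self (fun h => hb (h ▸ ha')), one_mul,
        ih f a (List.nodup_cons.mp hnd).2 ha'
          (fun i hi hia => hf i (List.mem_cons_of_mem _ hi) hia)]

theorem star_list_prod {M : Type*} [Monoid M] [StarMul M] :
    ∀ (l : List M), (∀ x ∈ l, ∀ y ∈ l, Commute (star x) (star y)) →
      star l.prod = (l.map star).prod := by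
  intro l
  induction l with
  | nil => simp
  | cons a l ih =>
    intro hc
    simp only [List.prod_cons, star_mul, List.map_cons]
    rw [ih (fun x hx y hy => hc x (List.mem_cons_of_mem _ hx) y (List.mem_cons_of_mem _ hy))]
    have : Commute ((l.map star).prod) (star a) := by
      apply Commute.list_prod_left
      intro z hz
      obtain ⟨x, hx, rfl⟩ := List.mem_map.mp hz
      exact hc x (List.mem_cons_of_mem _ hx) a List.mem_cons_self
    rw [this.eq]

/-! ### One-mode normal ordering in a ring -/

theorem a_mul_pow_b {R : Type*} [Ring R] {a b : R} (h : a * b = b * a + 1) :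
    ∀ s : ℕ, a * b ^ s = b ^ s * a + s • b ^ (s - 1) := by
  have key : ∀ s : ℕ, a * b ^ (s + 1) = b ^ (s + 1) * a + (s + 1) • b ^ s := by
    intro s
    induction s with
    | zero => simpa using h
    | succ m ih =>
      calc a * b ^ (m + 1 + 1) = (a * b ^ (m + 1)) * b := by rw [pow_succ, mul_assoc]
        _ = (b ^ (m + 1) * a + (m + 1) • b ^ m) * b := by rw [ih]
        _ = b ^ (m + 1) * (a * b) + (m + 1) • (b ^ m * b) := by
              rw [add_mul, smul_mul_assoc, mul_assoc]
        _ = b ^ (m + 1) * (b * a + 1) + (m + 1) • b ^ (m + 1) := by rw [h, ← pow_succ]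
        _ = b ^ (m + 1 + 1) * a + ((m + 1) • b ^ (m + 1) + b ^ (m + 1)) := by
              rw [mul_add, mul_one, ← mul_assoc, ← pow_succ]; abel
        _ = b ^ (m + 1 + 1) * a + (m + 1 + 1) • b ^ (m + 1) := by rw [← succ_nsmul]
  intro s
  cases s with
  | zero => simp
  | succ m => simpa using key m

theorem pow_a_mul_pow_b {R : Type*} [Ring R] {a b : R} (h : a * b = b * a + 1) :
    ∀ k q : ℕ, a ^ k * b ^ q =
      ∑ m ∈ Finset.range (q + 1),
        (Nat.choose k m * Nat.choose q m * Nat.factorial m) • (b ^ (q - m) * a ^ (k - m)) := by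
  intro k
  induction k with
  | zero =>
    intro q
    rw [Finset.sum_eq_single_of_mem 0 (Finset.mem_range.mpr (by omega))]
    · simp
    · intro m _ hm
      rw [Nat.choose_eq_zero_of_lt (by omega), zero_mul, zero_mul, zero_smul]
  | succ k ih =>
    intro q
    have coeff_id : ∀ m : ℕ,
        Nat.choose (k+1) (m+1) * Nat.choose q (m+1) * Nat.factorial (m+1)
          = Nat.choose k (m+1) * Nat.choose q (m+1) * Nat.factorial (m+1)
            + Nat.choose k m * Nat.choose q m * Nat.factorial m * (q - m) := by
      intro m
      rw [Nat.choose_succ_succ, add_mul, add_mul]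
      rw [add_comm]
      congr 1
      calc Nat.choose k m * Nat.choose q (m+1) * Nat.factorial (m+1)
          = Nat.choose k m * (Nat.choose q (m+1) * (m+1)) * Nat.factorial m := by
            rw [Nat.factorial_succ]; ring
        _ = Nat.choose k m * (Nat.choose q m * (q - m)) * Nat.factorial m := by
            rw [Nat.choose_succ_right_eq]
        _ = Nat.choose k m * Nat.choose q m * Nat.factorial m * (q - m) := by ring
    rw [pow_succ', mul_assoc, ih q, Finset.mul_sum]
    have step : ∀ m ∈ Finset.range (q + 1),
        a * ((Nat.choose k m * Nat.choose q m * Nat.factorial m) • (b ^ (q - m) * a ^ (k - m)))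
          = (Nat.choose k m * Nat.choose q m * Nat.factorial m) • (b ^ (q - m) * a ^ ((k - m) + 1))
            + ((Nat.choose k m * Nat.choose q m * Nat.factorial m) * (q - m)) •
              (b ^ (q - m - 1) * a ^ (k - m)) := by
      intro m _
      set C := Nat.choose k m * Nat.choose q m * Nat.factorial m with hC
      calc a * (C • (b ^ (q - m) * a ^ (k - m)))
          = C • ((a * b ^ (q - m)) * a ^ (k - m)) := by
            rw [mul_smul_comm, mul_assoc]
        _ = C • ((b ^ (q - m) * a + (q - m) • b ^ (q - m - 1)) * a ^ (k - m)) := by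
            rw [a_mul_pow_b h]
        _ = C • (b ^ (q - m) * a ^ ((k - m) + 1))
              + (C * (q - m)) • (b ^ (q - m - 1) * a ^ (k - m)) := by
            rw [add_mul, smul_mul_assoc, mul_assoc (b ^ (q - m)) a, ← pow_succ', smul_add,
              smul_smul]
    rw [Finset.sum_congr rfl step, Finset.sum_add_distrib]
    have fix : ∀ m ∈ Finset.range (q + 1),
        (Nat.choose k m * Nat.choose q m * Nat.factorial m) • (b ^ (q - m) * a ^ ((k - m) + 1))
          = (Nat.choose k m * Nat.choose q m * Nat.factorial m) • (b ^ (q - m) * a ^ ((k + 1) - m)) := by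
      intro m _
      rcases le_or_gt m k with hm | hm
      · have : k - m + 1 = k + 1 - m := by omega
        rw [this]
      · rw [Nat.choose_eq_zero_of_lt hm, zero_mul, zero_mul, zero_smul, zero_smul]
    rw [Finset.sum_congr rfl fix]
    rw [Finset.sum_range_succ (f := fun m =>
      ((Nat.choose k m * Nat.choose q m * Nat.factorial m) * (q - m)) •
        (b ^ (q - m - 1) * a ^ (k - m)))]
    rw [Nat.sub_self, mul_zero, zero_smul, add_zero]
    rw [Finset.sum_range_succ' (f := fun m =>
      (Nat.choose (k+1) m * Nat.choose q m * Nat.factorial m) • (b ^ (q - m) * a ^ ((k + 1) - m)))]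
    rw [Finset.sum_range_succ' (f := fun m =>
      (Nat.choose k m * Nat.choose q m * Nat.factorial m) • (b ^ (q - m) * a ^ ((k + 1) - m)))]
    simp only [Nat.choose_zero_right]
    rw [add_right_comm]
    congr 1
    rw [← Finset.sum_add_distrib]
    refine Finset.sum_congr rfl ?_
    intro m _
    have e1 : q - (m + 1) = q - m - 1 := by omega
    have e2 : k + 1 - (m + 1) = k - m := by omega
    rw [coeff_id m, add_nsmul, e1, e2]

/-! ### absSum of finsupps -/

def absSum {β : Type*} (f : β →₀ ℂ) : ℝ := f.sum fun _ z => ‖z‖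

theorem absSum_eq_sum_of_subset {β : Type*} (f : β →₀ ℂ) (S : Finset β)
    (h : f.support ⊆ S) : absSum f = ∑ x ∈ S, ‖f x‖ := by
  rw [absSum, Finsupp.sum]
  exact Finset.sum_subset h (fun x _ hx => by
    rw [Finsupp.notMem_support_iff.mp hx, norm_zero])

theorem absSum_add_le {β : Type*} (f g : β →₀ ℂ) :
    absSum (f + g) ≤ absSum f + absSum g := by
  classical
  rw [absSum_eq_sum_of_subset (f + g) (f.support ∪ g.support) Finsupp.support_add,
    absSum_eq_sum_of_subset f (f.support ∪ g.support) Finset.subset_union_left,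
    absSum_eq_sum_of_subset g (f.support ∪ g.support) Finset.subset_union_right,
    ← Finset.sum_add_distrib]
  refine Finset.sum_le_sum fun x _ => ?_
  simpa using norm_add_le (f x) (g x)

theorem absSum_sum_le {β ι : Type*} (s : Finset ι) (F : ι → (β →₀ ℂ)) :
    absSum (∑ j ∈ s, F j) ≤ ∑ j ∈ s, absSum (F j) :=
  Finset.le_sum_of_subadditive absSum (by simp [absSum]) absSum_add_le s F

theorem absSum_single {β : Type*} (x : β) (c : ℂ) :
    absSum (Finsupp.single x c) = ‖c‖ := by
  rw [absSum, Finsupp.sum_single_index]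
  exact norm_zero

theorem absSum_sum_single {α β : Type*} (F : Finset α) (pt : α → β)
    (hpt : ∀ x ∈ F, ∀ y ∈ F, pt x = pt y → x = y) (c : α → ℝ) (hc : ∀ i ∈ F, 0 ≤ c i) :
    absSum (∑ i ∈ F, Finsupp.single (pt i) ((c i : ℂ))) = ∑ i ∈ F, c i := by
  classical
  have hsupp : (∑ i ∈ F, Finsupp.single (pt i) ((c i : ℂ))).support ⊆ F.image pt := by
    refine Finsupp.support_finset_sum.trans ?_
    intro x hx
    obtain ⟨i, hi, hx⟩ := Finset.mem_biUnion.mp hx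
    have hx' : x = pt i := by simpa using Finsupp.support_single_subset hx
    exact Finset.mem_image.mpr ⟨i, hi, hx'.symm⟩
  rw [absSum_eq_sum_of_subset _ _ hsupp, Finset.sum_image hpt]
  refine Finset.sum_congr rfl fun i hi => ?_
  have : (∑ j ∈ F, Finsupp.single (pt j) ((c j : ℂ))) (pt i) = (c i : ℂ) := by
    rw [Finset.sum_apply']
    rw [Finset.sum_eq_single_of_mem i hi]
    · simp
    · intro j hj hji
      rw [Finsupp.single_apply, if_neg (fun h => hji (hpt j hj i hi h))]
  rw [this, Complex.norm_real, Real.norm_eq_abs, abs_of_nonneg (hc i hi)]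

end Aux

/-! ### Coefficients -/

def ccoef (k m : ℕ) : ℕ := Nat.choose k m * Nat.choose k m * Nat.factorial m

theorem ccoef_sum_le (k : ℕ) :
    ∑ m ∈ Finset.range (k + 1), ccoef k m ≤ 2 ^ k * Nat.factorial k := by
  calc ∑ m ∈ Finset.range (k + 1), ccoef k m
      ≤ ∑ m ∈ Finset.range (k + 1), Nat.choose k m * Nat.factorial k := by
        refine Finset.sum_le_sum fun m hm => ?_
        have hm' : m ≤ k := by
          have := Finset.mem_range.mp hm; omega
        have h1 : Nat.choose k m * Nat.factorial m ≤ Nat.factorial k := by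
          calc Nat.choose k m * Nat.factorial m
              ≤ Nat.choose k m * Nat.factorial m * Nat.factorial (k - m) :=
                Nat.le_mul_of_pos_right _ (Nat.factorial_pos _)
            _ = Nat.factorial k := Nat.choose_mul_factorial_mul_factorial hm'
        calc ccoef k m = Nat.choose k m * (Nat.choose k m * Nat.factorial m) := by
              rw [ccoef]; ring
          _ ≤ Nat.choose k m * Nat.factorial k := Nat.mul_le_mul_left _ h1
    _ = 2 ^ k * Nat.factorial k := by rw [← Finset.sum_mul, Nat.sum_range_choose]

theorem ccoef_sum_real (k : ℕ) :
    ∑ m ∈ Finset.range (k + 1), (ccoef k m : ℝ)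
      = ∑ m ∈ Finset.range (k + 1),
          (Nat.factorial k : ℝ) ^ 2 /
            ((Nat.factorial m : ℝ) ^ 2 * (Nat.factorial (k - m) : ℝ)) := by
  rw [← Finset.sum_range_reflect (fun m => (ccoef k m : ℝ)) (k + 1)]
  refine Finset.sum_congr rfl fun m hm => ?_
  have hm' : m ≤ k := by have := Finset.mem_range.mp hm; omega
  have h1 : k + 1 - 1 - m = k - m := by omega
  rw [h1]
  have h2 : Nat.choose k (k - m) = Nat.choose k m := Nat.choose_symm hm'
  have hfac : ((Nat.choose k m : ℝ)) * (Nat.factorial m : ℝ) * (Nat.factorial (k - m) : ℝ)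
      = (Nat.factorial k : ℝ) := by
    exact_mod_cast congrArg (Nat.cast : ℕ → ℝ) (Nat.choose_mul_factorial_mul_factorial hm')
  have hpos : ((Nat.factorial m : ℝ)) ^ 2 * (Nat.factorial (k - m) : ℝ) ≠ 0 := by positivity
  rw [eq_div_iff hpos]
  simp only [ccoef, h2]
  push_cast
  calc ((Nat.choose k m : ℝ) * (Nat.choose k m : ℝ) * (Nat.factorial (k - m) : ℝ))
        * ((Nat.factorial m : ℝ) ^ 2 * (Nat.factorial (k - m) : ℝ))
      = ((Nat.choose k m : ℝ) * (Nat.factorial m : ℝ) * (Nat.factorial (k - m) : ℝ)) ^ 2 := by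
        ring
    _ = (Nat.factorial k : ℝ) ^ 2 := by rw [hfac]

theorem ccoef_real_sum_le (k : ℕ) :
    ∑ m ∈ Finset.range (k + 1),
        (Nat.factorial k : ℝ) ^ 2 /
          ((Nat.factorial m : ℝ) ^ 2 * (Nat.factorial (k - m) : ℝ))
      ≤ 2 ^ k * Nat.factorial k := by
  rw [← ccoef_sum_real]
  calc ∑ m ∈ Finset.range (k + 1), (ccoef k m : ℝ)
      = ((∑ m ∈ Finset.range (k + 1), ccoef k m : ℕ) : ℝ) := by push_cast; rfl
    _ ≤ ((2 ^ k * Nat.factorial k : ℕ) : ℝ) := Nat.cast_le.mpr (ccoef_sum_le k)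
    _ = 2 ^ k * (Nat.factorial k : ℝ) := by push_cast; ring

namespace WeylAlgebra

variable {n : ℕ} (W : WeylAlgebra n)

theorem commute_a_star {i j : Fin n} (h : i ≠ j) : Commute (W.a i) (star (W.a j)) := by
  have hc := W.ccr i j
  rw [if_neg h] at hc
  exact sub_eq_zero.mp hc

theorem commute_aa (i j : Fin n) : Commute (W.a i) (W.a j) := W.comm_aa i j

theorem commute_ss (i j : Fin n) : Commute (star (W.a i)) (star (W.a j)) := W.comm_ss i j

theorem a_star_rel (i : Fin n) : W.a i * star (W.a i) = star (W.a i) * W.a i + 1 := by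
  have hc := W.ccr i i
  rw [if_pos rfl, sub_eq_iff_eq_add] at hc
  rw [hc, add_comm]

theorem mode_expand (i : Fin n) (k : ℕ) :
    W.a i ^ k * star (W.a i) ^ k
      = ∑ m ∈ Finset.range (k + 1),
          ((ccoef k m : ℕ) : ℂ) • (star (W.a i) ^ (k - m) * W.a i ^ (k - m)) := by
  rw [pow_a_mul_pow_b (W.a_star_rel i) k k]
  refine Finset.sum_congr rfl fun m _ => ?_
  rw [Nat.cast_smul_eq_nsmul]
  rfl

theorem mode_mul_basis (a0 : Fin n) (e : ℕ) (u : Fin n → ℕ) (hu : u a0 = 0) :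
    (star (W.a a0) ^ e * W.a a0 ^ e) * W.basis (u, u)
      = W.basis (Function.update u a0 e, Function.update u a0 e) := by
  classical
  rw [W.basis_eq, W.basis_eq]
  have hAS : Commute (W.a a0 ^ e) ((List.ofFn fun i => star (W.a i) ^ u i).prod) := by
    rw [List.ofFn_eq_map]
    apply Commute.list_prod_right
    intro z hz
    obtain ⟨i, _, rfl⟩ := List.mem_map.mp hz
    rcases eq_or_ne i a0 with rfl | hne
    · rw [hu, pow_zero]; exact Commute.one_right _
    · exact (W.commute_a_star hne.symm).pow_pow e (u i)
  have merge : ∀ (x : Fin n → W.carrier), (∀ i j, Commute (x i) (x j)) →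
      x a0 ^ e * (List.ofFn fun i => x i ^ u i).prod
        = (List.ofFn fun i => x i ^ Function.update u a0 e i).prod := by
    intro x hx
    have h1 : (List.ofFn fun i => x i ^ (if i = a0 then e else 0)).prod = x a0 ^ e := by
      rw [List.ofFn_eq_map,
        list_prod_eq_single _ _ a0 (List.nodup_finRange n) (List.mem_finRange a0)
          (fun i _ hne => by rw [if_neg hne, pow_zero])]
      rw [if_pos rfl]
    rw [← h1, List.ofFn_eq_map, List.ofFn_eq_map,
      list_prod_interchange _ _ _ (List.nodup_finRange n)
        (fun i _ j _ _ => (hx i j).pow_pow _ _), ← List.ofFn_eq_map]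
    have hfn : (fun i => (x i ^ if i = a0 then e else 0) * x i ^ u i)
        = fun i => x i ^ Function.update u a0 e i := by
      funext i
      rw [← pow_add]
      congr 1
      rcases eq_or_ne i a0 with rfl | hne
      · rw [if_pos rfl, hu, Function.update_self, add_zero]
      · rw [if_neg hne, Function.update_of_ne hne, zero_add]
    rw [hfn]
  have hS := merge (fun i => star (W.a i)) (fun i j => W.commute_ss i j)
  have hA := merge (fun i => W.a i) (fun i j => W.commute_aa i j)
  calc (star (W.a a0) ^ e * W.a a0 ^ e) *
        ((List.ofFn fun i => star (W.a i) ^ u i).prod * (List.ofFn fun i => W.a i ^ u i).prod)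
      = star (W.a a0) ^ e * ((W.a a0 ^ e * (List.ofFn fun i => star (W.a i) ^ u i).prod) *
          (List.ofFn fun i => W.a i ^ u i).prod) := by
        rw [mul_assoc, ← mul_assoc (W.a a0 ^ e)]
    _ = star (W.a a0) ^ e * (((List.ofFn fun i => star (W.a i) ^ u i).prod) *
          (W.a a0 ^ e * (List.ofFn fun i => W.a i ^ u i).prod)) := by
        rw [hAS.eq, mul_assoc]
    _ = (star (W.a a0) ^ e * (List.ofFn fun i => star (W.a i) ^ u i).prod) *
          (W.a a0 ^ e * (List.ofFn fun i => W.a i ^ u i).prod) := by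
        rw [← mul_assoc]
    _ = _ := by rw [hS, hA]

theorem rep_list (t : Fin n → ℕ) :
    ∀ l : List (Fin n), l.Nodup →
      ∃ (N : ℕ) (g : Fin N → (Fin n → ℕ)) (c : Fin N → ℕ),
        ((l.map fun i => W.a i ^ t i * star (W.a i) ^ t i).prod
            = ∑ j, ((c j : ℕ) : ℂ) • W.basis (g j, g j))
        ∧ (∀ j i, i ∉ l → g j i = 0)
        ∧ (∑ j, c j) ≤ (l.map fun i => 2 ^ t i * Nat.factorial (t i)).prod := by
  intro l
  induction l with
  | nil =>
    intro _
    refine ⟨1, fun _ => fun _ => 0, fun _ => 1, ?_, fun j i _ => rfl, by simp⟩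
    have hb : W.basis (fun _ => (0:ℕ), fun _ => (0:ℕ)) = 1 := by
      rw [W.basis_eq]
      simp
    simp [hb]
  | cons a0 l ih =>
    intro hnd
    have ha0 : a0 ∉ l := (List.nodup_cons.mp hnd).1
    obtain ⟨N, g, c, hp, hgs, hb⟩ := ih (List.nodup_cons.mp hnd).2
    classical
    refine ⟨(t a0 + 1) * N,
      fun x => Function.update (g (finProdFinEquiv.symm x).2) a0
        (t a0 - ((finProdFinEquiv.symm x).1 : ℕ)),
      fun x => ccoef (t a0) ((finProdFinEquiv.symm x).1 : ℕ) * c ((finProdFinEquiv.symm x).2),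
      ?_, ?_, ?_⟩
    · simp only [List.map_cons, List.prod_cons]
      calc (W.a a0 ^ t a0 * star (W.a a0) ^ t a0) *
            (l.map fun i => W.a i ^ t i * star (W.a i) ^ t i).prod
          = (∑ m ∈ Finset.range (t a0 + 1),
              ((ccoef (t a0) m : ℕ) : ℂ) • (star (W.a a0) ^ (t a0 - m) * W.a a0 ^ (t a0 - m))) *
            (∑ j, ((c j : ℕ) : ℂ) • W.basis (g j, g j)) := by
            rw [W.mode_expand a0 (t a0), hp]
        _ = ∑ m ∈ Finset.range (t a0 + 1), ∑ j, ((ccoef (t a0) m * c j : ℕ) : ℂ) •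
              W.basis (Function.update (g j) a0 (t a0 - m),
                Function.update (g j) a0 (t a0 - m)) := by
            rw [Finset.sum_mul_sum]
            refine Finset.sum_congr rfl fun m _ => Finset.sum_congr rfl fun j _ => ?_
            rw [smul_mul_smul_comm, W.mode_mul_basis a0 (t a0 - m) (g j) (hgs j a0 ha0),
              Nat.cast_mul]
        _ = ∑ m : Fin (t a0 + 1), ∑ j, ((ccoef (t a0) (m : ℕ) * c j : ℕ) : ℂ) •
              W.basis (Function.update (g j) a0 (t a0 - (m : ℕ)),
                Function.update (g j) a0 (t a0 - (m : ℕ))) := by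
            rw [Finset.sum_range]
        _ = ∑ p : Fin (t a0 + 1) × Fin N, ((ccoef (t a0) (p.1 : ℕ) * c p.2 : ℕ) : ℂ) •
              W.basis (Function.update (g p.2) a0 (t a0 - (p.1 : ℕ)),
                Function.update (g p.2) a0 (t a0 - (p.1 : ℕ))) := by
            rw [Fintype.sum_prod_type]
        _ = _ := by
            refine Fintype.sum_equiv finProdFinEquiv _ _ fun p => ?_
            simp
    · intro j i hi
      have h1 : i ≠ a0 := fun h => hi (h ▸ List.mem_cons_self)
      have h2 : i ∉ l := fun h => hi (List.mem_cons_of_mem _ h)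
      simp only [Function.update_of_ne h1]
      exact hgs _ i h2
    · simp only [List.map_cons, List.prod_cons]
      have e1 : ∑ x : Fin ((t a0 + 1) * N),
            ccoef (t a0) ((finProdFinEquiv.symm x).1 : ℕ) * c ((finProdFinEquiv.symm x).2)
          = ∑ p : Fin (t a0 + 1) × Fin N, ccoef (t a0) (p.1 : ℕ) * c p.2 :=
        (Fintype.sum_equiv finProdFinEquiv _ _ fun p => by simp).symm
      rw [e1, Fintype.sum_prod_type]
      have e2 : ∑ m : Fin (t a0 + 1), ∑ j, ccoef (t a0) (m : ℕ) * c j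
          = (∑ m ∈ Finset.range (t a0 + 1), ccoef (t a0) m) * ∑ j, c j := by
        rw [← Finset.sum_range (fun m => ∑ j, ccoef (t a0) m * c j), Finset.sum_mul]
        exact Finset.sum_congr rfl fun m _ => (Finset.mul_sum _ _ _).symm
      rw [e2]
      exact Nat.mul_le_mul (ccoef_sum_le (t a0)) hb

theorem l1_le_of_rep {N : ℕ} (g : Fin N → (Fin n → ℕ)) (c : Fin N → ℕ) (p : W.carrier)
    (hp : p = ∑ j, ((c j : ℕ) : ℂ) • W.basis (g j, g j)) :
    W.l1 p ≤ ∑ j, (c j : ℝ) := by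
  have hrepr : W.basis.repr p = ∑ j, Finsupp.single (g j, g j) ((c j : ℂ)) := by
    rw [hp, map_sum]
    refine Finset.sum_congr rfl fun j _ => ?_
    rw [map_smul, Module.Basis.repr_self, Finsupp.smul_single, smul_eq_mul, mul_one]
  have h0 : W.l1 p = absSum (W.basis.repr p) := rfl
  rw [h0, hrepr]
  refine (absSum_sum_le _ _).trans (Finset.sum_le_sum fun j _ => ?_)
  rw [absSum_single]
  simp

theorem amon_star_eq (t : Fin n → ℕ) :
    W.amon t * star (W.amon t)
      = ((List.finRange n).map fun i => W.a i ^ t i * star (W.a i) ^ t i).prod := by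
  have hstar : star (W.amon t) = (List.ofFn fun i => star (W.a i) ^ t i).prod := by
    rw [amon, star_list_prod]
    · rw [List.map_ofFn]
      have hfun : (star ∘ fun i => W.a i ^ t i) = fun i => star (W.a i) ^ t i := by
        funext i
        exact star_pow _ _
      rw [hfun]
    · intro x hx y hy
      obtain ⟨i, hi⟩ := List.mem_ofFn.mp hx
      obtain ⟨j, hj⟩ := List.mem_ofFn.mp hy
      rw [← hi, ← hj, star_pow, star_pow]
      exact (W.commute_ss i j).pow_pow _ _
  rw [hstar, amon, List.ofFn_eq_map, List.ofFn_eq_map,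
    list_prod_interchange _ _ _ (List.nodup_finRange n)
      (fun i _ j _ hij => (W.commute_a_star hij).pow_pow _ _)]

theorem l1_amon_le (t : Fin n → ℕ) (k : ℕ) (ht : ∑ i, t i = k) :
    W.l1 (W.amon t * star (W.amon t)) ≤ 2 ^ k * Nat.factorial k := by
  obtain ⟨N, g, c, hp, _, hb⟩ := W.rep_list t (List.finRange n) (List.nodup_finRange n)
  rw [W.amon_star_eq t]
  refine (W.l1_le_of_rep g c _ hp).trans ?_
  have hB : ((List.finRange n).map fun i => 2 ^ t i * Nat.factorial (t i)).prod
      ≤ 2 ^ k * Nat.factorial k := by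
    have h1 : ((List.finRange n).map fun i => 2 ^ t i * Nat.factorial (t i)).prod
        = ∏ i : Fin n, (2 ^ t i * Nat.factorial (t i)) := by
      rw [← List.ofFn_eq_map, Fin.prod_ofFn]
    rw [h1, Finset.prod_mul_distrib, Finset.prod_pow_eq_pow_sum, ht]
    refine Nat.mul_le_mul_left _ ?_
    refine Nat.le_of_dvd (Nat.factorial_pos _) ?_
    rw [← ht]
    exact Nat.prod_factorial_dvd_factorial_sum _ _
  calc ∑ j, (c j : ℝ) = ((∑ j, c j : ℕ) : ℝ) := by push_cast; rfl
    _ ≤ ((2 ^ k * Nat.factorial k : ℕ) : ℝ) :=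
        Nat.cast_le.mpr (le_trans hb hB)
    _ = 2 ^ k * (Nat.factorial k : ℝ) := by push_cast; ring

theorem l1_one_mode (W1 : WeylAlgebra 1) (k : ℕ) :
    W1.l1 (W1.a 0 ^ k * star (W1.a 0) ^ k)
      = ∑ m ∈ Finset.range (k + 1), (ccoef k m : ℝ) := by
  classical
  have hbas : ∀ j : ℕ, star (W1.a 0) ^ j * W1.a 0 ^ j
      = W1.basis ((fun _ => j : Fin 1 → ℕ), (fun _ => j : Fin 1 → ℕ)) := by
    intro j
    rw [W1.basis_eq]
    simp [List.ofFn_succ]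
  have hx : W1.a 0 ^ k * star (W1.a 0) ^ k
      = ∑ m ∈ Finset.range (k + 1), ((ccoef k m : ℕ) : ℂ) •
          W1.basis ((fun _ => k - m : Fin 1 → ℕ), (fun _ => k - m : Fin 1 → ℕ)) := by
    rw [W1.mode_expand 0 k]
    exact Finset.sum_congr rfl fun m _ => by rw [hbas]
  have hrepr : W1.basis.repr (W1.a 0 ^ k * star (W1.a 0) ^ k)
      = ∑ m ∈ Finset.range (k + 1),
          Finsupp.single ((fun _ => k - m : Fin 1 → ℕ), (fun _ => k - m : Fin 1 → ℕ))
            (((ccoef k m : ℝ) : ℂ)) := by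
    rw [hx, map_sum]
    refine Finset.sum_congr rfl fun m _ => ?_
    rw [map_smul, Module.Basis.repr_self, Finsupp.smul_single, smul_eq_mul, mul_one]
    norm_num
  have h0 : W1.l1 (W1.a 0 ^ k * star (W1.a 0) ^ k)
      = absSum (W1.basis.repr (W1.a 0 ^ k * star (W1.a 0) ^ k)) := rfl
  rw [h0, hrepr]
  refine absSum_sum_single _ _ ?_ _ (fun m _ => by positivity)
  intro x hx' y hy' hxy
  have h1 : (k : ℕ) - x = k - y := by
    have := congrFun (congrArg Prod.fst hxy) 0
    simpa using this
  have hx'' := Finset.mem_range.mp hx'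
  have hy'' := Finset.mem_range.mp hy'
  omega

end WeylAlgebra

/-- For `t ∈ ℕ^n` with `‖t‖₁ = k`, `l1(a^t (a^t)*) ≤ 2^k·k!`;
in particular, in `W₁`, `l1(a^k (a*)^k) = ∑_{m=0}^{k} (k!)²/((m!)²(k-m)!) ≤ 2^k·k!`. -/
theorem l1_antinormal_bound {n : ℕ} (hn : 1 ≤ n) (W : WeylAlgebra n)
    (t : Fin n → ℕ) (k : ℕ) (ht : ∑ i, t i = k) :
    W.l1 (W.amon t * star (W.amon t)) ≤ 2 ^ k * Nat.factorial k ∧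
    ∀ W1 : WeylAlgebra 1,
      W1.l1 (W1.a 0 ^ k * star (W1.a 0) ^ k) =
        (∑ m ∈ Finset.range (k + 1),
          (Nat.factorial k : ℝ) ^ 2 /
            ((Nat.factorial m : ℝ) ^ 2 * (Nat.factorial (k - m) : ℝ))) ∧
      (∑ m ∈ Finset.range (k + 1),
          (Nat.factorial k : ℝ) ^ 2 /
            ((Nat.factorial m : ℝ) ^ 2 * (Nat.factorial (k - m) : ℝ))) ≤
        2 ^ k * Nat.factorial k := by
  refine ⟨W.l1_amon_le t k ht, fun W1 => ⟨?_, ccoef_real_sum_le k⟩⟩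
  rw [W1.l1_one_mode k, ccoef_sum_real]
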